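/- Fix p ≥ 3, let a = (p − 2)/(2p), and suppose b ≥ 4a. Define g(u) = a u² − b u + 1_{|u| ≥ 2}∫₂^{|u|}√(t² − 4) dt. Then the unique minimizer of g is u_min = (2ab − √(b² + 4 − 16a²)) / (4a² − 1), and −(1/2)min_u g(u) = (1/4) b·u_min + log(((1/2) − a)u_min + (1/2)b). -/

import Mathlib

open Real intervalIntegral
open Set

noncomputable def Fg (t : ℝ) : ℝ :=
  t * Real.sqrt (t ^ 2 - 4) / 2 - 2 * Real.log ((t + Real.sqrt (t ^ 2 - 4)) / 2)

noncomputable def phig (x : ℝ) : ℝ := ∫ t in (2:ℝ)..x, Real.sqrt (t ^ 2 - 4)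

lemma contg : Continuous fun t : ℝ => Real.sqrt (t ^ 2 - 4) :=
  Real.continuous_sqrt.comp (by continuity)

lemma sqrt_deriv' {t : ℝ} (ht : 2 < t) :
    HasDerivAt (fun t : ℝ => Real.sqrt (t ^ 2 - 4)) (t / Real.sqrt (t ^ 2 - 4)) t := by
  have h1 : HasDerivAt (fun t : ℝ => t ^ 2 - 4) (2 * t) t := by
    simpa using (hasDerivAt_pow 2 t).sub_const 4
  have h2 := h1.sqrt (by nlinarith)
  convert h2 using 1
  ring

lemma Fg_deriv {t : ℝ} (ht : 2 < t) : HasDerivAt Fg (Real.sqrt (t ^ 2 - 4)) t := by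
  have hpos : (0:ℝ) < t ^ 2 - 4 := by nlinarith
  have hs0 : 0 < Real.sqrt (t ^ 2 - 4) := Real.sqrt_pos.mpr hpos
  set s := Real.sqrt (t ^ 2 - 4) with hs
  have hs2 : s ^ 2 = t ^ 2 - 4 := Real.sq_sqrt hpos.le
  have hD : HasDerivAt (fun t : ℝ => Real.sqrt (t ^ 2 - 4)) (t / s) t := sqrt_deriv' ht
  have h1 : HasDerivAt (fun t : ℝ => t * Real.sqrt (t ^ 2 - 4) / 2)
      ((1 * s + t * (t / s)) / 2) t := ((hasDerivAt_id t).mul hD).div_const 2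
  have harg : HasDerivAt (fun t : ℝ => (t + Real.sqrt (t ^ 2 - 4)) / 2)
      ((1 + t / s) / 2) t := ((hasDerivAt_id t).add hD).div_const 2
  have hpos2 : (0:ℝ) < (t + s) / 2 := by positivity
  have h2 : HasDerivAt (fun t : ℝ => Real.log ((t + Real.sqrt (t ^ 2 - 4)) / 2))
      (((1 + t / s) / 2) / ((t + s) / 2)) t := harg.log (ne_of_gt hpos2)
  have h3 : HasDerivAt Fg (((1 * s + t * (t / s)) / 2) - 2 * (((1 + t / s) / 2) / ((t + s) / 2))) t :=
    h1.sub (h2.const_mul 2)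
  convert h3 using 1
  have hts : t + s ≠ 0 := by positivity
  field_simp
  linear_combination (s + t) * hs2

lemma integral_formula {x : ℝ} (hx : 2 ≤ x) : phig x = Fg x := by
  have hcont : ContinuousOn Fg (Icc 2 x) := by
    apply ContinuousOn.sub
    · exact ((continuous_id.mul contg).div_const 2).continuousOn
    · apply ContinuousOn.mul continuousOn_const
      apply ContinuousOn.log (((continuous_id.add contg).div_const 2).continuousOn)
      intro t ht
      have h1 : 2 ≤ t := ht.1
      have := Real.sqrt_nonneg (t ^ 2 - 4)
      exact ne_of_gt (by simp only [Pi.add_apply, id]; linarith)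
  have hderiv : ∀ t ∈ Ioo (2:ℝ) x, HasDerivWithinAt Fg (Real.sqrt (t ^ 2 - 4)) (Ioi t) t :=
    fun t ht => (Fg_deriv ht.1).hasDerivWithinAt
  have hint : IntervalIntegrable (fun t : ℝ => Real.sqrt (t ^ 2 - 4)) MeasureTheory.volume 2 x :=
    contg.intervalIntegrable 2 x
  have h := intervalIntegral.integral_eq_sub_of_hasDeriv_right_of_le hx hcont hderiv hint
  have h2 : Fg 2 = 0 := by simp only [Fg]; norm_num
  unfold phig
  rw [h, h2, sub_zero]

lemma int_lb {c d : ℝ} (hc : 2 ≤ c) (hcd : c ≤ d) :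
    Real.sqrt (c ^ 2 - 4) * (d - c) ≤ ∫ t in c..d, Real.sqrt (t ^ 2 - 4) := by
  have h := intervalIntegral.integral_mono_on (μ := MeasureTheory.volume) hcd
    (_root_.intervalIntegrable_const (c := Real.sqrt (c ^ 2 - 4))) (contg.intervalIntegrable c d)
    (fun t ht => Real.sqrt_le_sqrt (by nlinarith [ht.1] : c ^ 2 - 4 ≤ t ^ 2 - 4))
  simpa [mul_comm] using h

lemma int_ub {c d : ℝ} (hc : 2 ≤ c) (hcd : c ≤ d) :
    (∫ t in c..d, Real.sqrt (t ^ 2 - 4)) ≤ Real.sqrt (d ^ 2 - 4) * (d - c) := by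
  have h := intervalIntegral.integral_mono_on (μ := MeasureTheory.volume) hcd
    (contg.intervalIntegrable c d) (_root_.intervalIntegrable_const (c := Real.sqrt (d ^ 2 - 4)))
    (fun t ht => Real.sqrt_le_sqrt (by nlinarith [ht.1, ht.2] : t ^ 2 - 4 ≤ d ^ 2 - 4))
  simpa [mul_comm] using h

lemma phig_sub (u x : ℝ) : phig x - phig u = ∫ t in u..x, Real.sqrt (t ^ 2 - 4) := by
  have h := intervalIntegral.integral_add_adjacent_intervals (μ := MeasureTheory.volume)
    (contg.intervalIntegrable 2 u) (contg.intervalIntegrable u x)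
  unfold phig
  linarith

lemma phig_tangent {u x : ℝ} (hu : 2 ≤ u) (hx : 2 ≤ x) :
    Real.sqrt (u ^ 2 - 4) * (x - u) ≤ phig x - phig u := by
  rw [phig_sub]
  rcases le_total u x with h | h
  · exact int_lb hu h
  · rw [intervalIntegral.integral_symm]
    have h2 := int_ub hx h
    nlinarith

lemma phig_nonneg {x : ℝ} (hx : 2 ≤ x) : 0 ≤ phig x := by
  have h := int_lb (le_refl (2:ℝ)) hx
  have h0 : Real.sqrt ((2:ℝ) ^ 2 - 4) = 0 := by norm_num
  rw [h0] at h
  simpa [phig] using by linarith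

lemma phig_ub {u : ℝ} (hu : 2 ≤ u) : phig u ≤ Real.sqrt (u ^ 2 - 4) * (u - 2) :=
  int_ub (le_refl 2) hu

set_option maxHeartbeats 1000000 in
theorem g_aux (a b : ℝ) (ha0 : 0 < a) (ha2 : a < 1/2) (hb : 4 * a ≤ b) :
    let g : ℝ → ℝ := fun u =>
      a * u ^ 2 - b * u + (if 2 ≤ |u| then ∫ t in (2 : ℝ)..|u|, Real.sqrt (t ^ 2 - 4) else 0)
    let umin : ℝ := (2 * a * b - Real.sqrt (b ^ 2 + 4 - 16 * a ^ 2)) / (4 * a ^ 2 - 1)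
    (∀ v, g umin ≤ g v) ∧ (∀ u, (∀ v, g u ≤ g v) → u = umin) ∧
      -(1 / 2) * g umin = (1 / 4) * b * umin + Real.log ((1 / 2 - a) * umin + (1 / 2) * b) := by
  intro g umin
  have hgdef : ∀ v : ℝ, g v = a * v ^ 2 - b * v + (if 2 ≤ |v| then phig |v| else 0) :=
    fun _ => rfl
  have hb0 : 0 < b := lt_of_lt_of_le (by linarith) hb
  set D := b ^ 2 + 4 - 16 * a ^ 2 with hDdef
  have hD4 : (4:ℝ) ≤ D := by nlinarith
  have hsD : Real.sqrt D ^ 2 = D := Real.sq_sqrt (by linarith)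
  have hsDnn : 0 ≤ Real.sqrt D := Real.sqrt_nonneg D
  have hden : 4 * a ^ 2 - 1 < 0 := by nlinarith
  have hueq : umin * (4 * a ^ 2 - 1) = 2 * a * b - Real.sqrt D := by
    show ((2 * a * b - Real.sqrt D) / (4 * a ^ 2 - 1)) * (4 * a ^ 2 - 1) = _
    exact div_mul_cancel₀ _ (ne_of_lt hden)
  have hkey : 2 * a * b + 2 - 8 * a ^ 2 ≤ Real.sqrt D := by
    have h1 : (2 * a * b + 2 - 8 * a ^ 2) ^ 2 ≤ D := by nlinarith [sq_nonneg (b - 4 * a)]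
    nlinarith [hsD, hsDnn]
  have hu2 : 2 ≤ umin := by
    rw [show umin = (2 * a * b - Real.sqrt D) / (4 * a ^ 2 - 1) from rfl,
      le_div_iff_of_neg hden]
    nlinarith
  have hs0 : 0 ≤ b - 2 * a * umin := by
    have h1 : 2 * a * Real.sqrt D ≤ b := by nlinarith [hsD, hsDnn]
    nlinarith [hueq]
  have hrD : Real.sqrt D = 2 * a * b - umin * (4 * a ^ 2 - 1) := by linarith
  have hDeq : (2 * a * b - umin * (4 * a ^ 2 - 1)) ^ 2 = D := by rw [← hrD]; exact hsD
  have hmul : (4 * a ^ 2 - 1) * ((b - 2 * a * umin) ^ 2 - (umin ^ 2 - 4)) = 0 := by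
    linear_combination hDeq
  have hs2 : (b - 2 * a * umin) ^ 2 = umin ^ 2 - 4 := by
    rcases mul_eq_zero.mp hmul with h | h
    · exact absurd h (ne_of_lt hden)
    · linarith
  have hsq : Real.sqrt (umin ^ 2 - 4) = b - 2 * a * umin := by
    rw [← hs2]; exact Real.sqrt_sq hs0
  -- tangent bound for the integral part
  have hIdiff : ∀ v : ℝ, (b - 2 * a * umin) * (v - umin) ≤
      (if 2 ≤ |v| then phig |v| else 0) - phig umin := by
    intro v
    have hub : phig umin ≤ (b - 2 * a * umin) * (umin - 2) := by
      have := phig_ub hu2; rw [hsq] at this; exact this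
    by_cases h : 2 ≤ |v|
    · rw [if_pos h]
      rcases abs_cases v with ⟨hv, _⟩ | ⟨hv, _⟩
      · rw [hv] at h ⊢
        have := phig_tangent hu2 h
        rw [hsq] at this
        exact this
      · rw [hv] at h ⊢
        have h1 : 0 ≤ phig (-v) := phig_nonneg h
        have h2 : (b - 2 * a * umin) * (umin - 2) ≤ (b - 2 * a * umin) * (umin - v) := by
          have : v ≤ 2 := by linarith
          nlinarith
        nlinarith
    · rw [if_neg h]
      push_neg at h
      have hv2 : v < 2 := lt_of_abs_lt h
      have h2 : (b - 2 * a * umin) * (umin - 2) ≤ (b - 2 * a * umin) * (umin - v) := by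
        nlinarith
      nlinarith
  have hgu : g umin = a * umin ^ 2 - b * umin + phig umin := by
    rw [hgdef, abs_of_nonneg (by linarith : (0:ℝ) ≤ umin), if_pos hu2]
  have hlow : ∀ v, g umin + a * (v - umin) ^ 2 ≤ g v := by
    intro v
    have h := hIdiff v
    rw [hgu, hgdef v]
    nlinarith [h]
  refine ⟨?_, ?_, ?_⟩
  · intro v
    have h := hlow v
    nlinarith [mul_nonneg ha0.le (sq_nonneg (v - umin))]
  · intro w hw
    have h1 := hw umin
    have h2 := hlow w
    have h3 : (w - umin) ^ 2 ≤ 0 := by nlinarith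
    have h4 : (w - umin) ^ 2 = 0 := le_antisymm h3 (sq_nonneg _)
    have h5 : w - umin = 0 := by
      exact pow_eq_zero_iff (by norm_num) |>.mp h4
    linarith
  · have hI : phig umin = umin * (b - 2 * a * umin) / 2 -
        2 * Real.log ((umin + (b - 2 * a * umin)) / 2) := by
      rw [integral_formula hu2]
      unfold Fg
      rw [hsq]
    rw [hgu, hI]
    have harg : (umin + (b - 2 * a * umin)) / 2 = (1 / 2 - a) * umin + (1 / 2) * b := by
      ring
    rw [harg]
    ring

theorem g_min_large_b (p b : ℝ) (hp : 3 ≤ p) (hb : 4 * ((p - 2) / (2 * p)) ≤ b) :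
    let a : ℝ := (p - 2) / (2 * p)
    let g : ℝ → ℝ := fun u =>
      a * u ^ 2 - b * u + (if 2 ≤ |u| then ∫ t in (2 : ℝ)..|u|, Real.sqrt (t ^ 2 - 4) else 0)
    let umin : ℝ := (2 * a * b - Real.sqrt (b ^ 2 + 4 - 16 * a ^ 2)) / (4 * a ^ 2 - 1)
    (∀ v, g umin ≤ g v) ∧ (∀ u, (∀ v, g u ≤ g v) → u = umin) ∧
      -(1 / 2) * g umin = (1 / 4) * b * umin + Real.log ((1 / 2 - a) * umin + (1 / 2) * b) := by
  have hp0 : (0:ℝ) < p := by linarith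
  have ha0 : 0 < (p - 2) / (2 * p) := div_pos (by linarith) (by linarith)
  have ha2 : (p - 2) / (2 * p) < 1 / 2 := by
    rw [div_lt_iff₀ (by linarith)]
    linarith
  exact g_aux ((p - 2) / (2 * p)) b ha0 ha2 hb
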